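/- Let E ⊂ T and suppose B is a Blaschke product with zero set A ⊂ D such that the radial limit B(e^{iθ}) = lim_{r→1} B(re^{iθ}) exists (with modulus one) at every point of T, and E = A' is the set of accumulation points of A on T. Then E is closed and nowhere dense in T. -/

import Mathlib

open Metric Filter Complex Set

/-- The Blaschke product with zero sequence `a`. -/
noncomputable def blaschkeProduct (a : ℕ → ℂ) (z : ℂ) : ℂ :=
  ∏' n, ((starRingEnd ℂ) (a n) / (‖a n‖ : ℂ)) *
    ((a n - z) / (1 - (starRingEnd ℂ) (a n) * z))

lemma normSq_identity (a z : ℂ) :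
    normSq (1 - (starRingEnd ℂ) a * z) = (1 - normSq a) * (1 - normSq z) + normSq (a - z) := by
  simp only [normSq_apply, Complex.sub_re, Complex.sub_im, Complex.mul_re, Complex.mul_im,
    Complex.one_re, Complex.one_im, Complex.conj_re, Complex.conj_im]
  ring

lemma denom_pos {a z : ℂ} (haa : ‖a‖ < 1) (hz : ‖z‖ < 1) :
    0 < ‖1 - (starRingEnd ℂ) a * z‖ := by
  rw [Complex.norm_def]
  apply Real.sqrt_pos.2
  rw [normSq_identity]
  have h1 : normSq a < 1 := by rw [← Complex.sq_norm]; nlinarith [norm_nonneg a]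
  have h2 : normSq z < 1 := by rw [← Complex.sq_norm]; nlinarith [norm_nonneg z]
  nlinarith [normSq_nonneg (a - z)]

noncomputable def Fct (a : ℕ → ℂ) (n : ℕ) (z : ℂ) : ℂ :=
  ((starRingEnd ℂ) (a n) / (‖a n‖ : ℂ)) *
    ((a n - z) / (1 - (starRingEnd ℂ) (a n) * z))

lemma abs_Fct (a : ℕ → ℂ) (n : ℕ) (z : ℂ) (h0 : a n ≠ 0) :
    ‖Fct a n z‖ =
      ‖a n - z‖ / ‖1 - (starRingEnd ℂ) (a n) * z‖ := by
  have h1 : ‖(starRingEnd ℂ) (a n) / (‖a n‖ : ℂ)‖ = 1 := by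
    rw [norm_div, Complex.norm_conj, Complex.norm_real, Real.norm_eq_abs, _root_.abs_of_nonneg (norm_nonneg _),
      div_self (norm_ne_zero_iff.mpr h0)]
  rw [Fct, norm_mul, h1, one_mul, norm_div]

lemma abs_Fct_le_one {a : ℕ → ℂ} {n : ℕ} {z : ℂ} (h0 : a n ≠ 0)
    (haa : ‖a n‖ < 1) (hz : ‖z‖ < 1) :
    ‖Fct a n z‖ ≤ 1 := by
  rw [abs_Fct a n z h0]
  rw [div_le_one (denom_pos haa hz)]
  have h := normSq_identity (a n) z
  have h1 : normSq (a n) < 1 := by rw [← Complex.sq_norm]; nlinarith [norm_nonneg (a n)]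
  have h2 : normSq z < 1 := by rw [← Complex.sq_norm]; nlinarith [norm_nonneg z]
  rw [Complex.norm_def, Complex.norm_def]
  apply Real.sqrt_le_sqrt
  nlinarith

lemma Fct_sub_one {a : ℕ → ℂ} {n : ℕ} {z : ℂ} (h0 : a n ≠ 0)
    (haa : ‖a n‖ < 1) (hz : ‖z‖ < 1) :
    ‖Fct a n z - 1‖ ≤ (1 + ‖z‖) / (1 - ‖z‖)
      * (1 - ‖a n‖) := by
  set s : ℝ := ‖a n‖ with hs
  have hs0 : (0:ℝ) < s := norm_pos_iff.mpr h0
  have hd : (1 : ℂ) - (starRingEnd ℂ) (a n) * z ≠ 0 := by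
    intro hdd
    have := denom_pos haa hz
    rw [hdd] at this; simp at this
  have hsC : (s : ℂ) ≠ 0 := by exact_mod_cast hs0.ne'
  have key : Fct a n z - 1 =
      ((s : ℂ) - 1) * ((s:ℂ) + (starRingEnd ℂ) (a n) * z)
        / ((s:ℂ) * (1 - (starRingEnd ℂ) (a n) * z)) := by
    rw [Fct]
    have habs2 : ((s:ℂ)) * (s:ℂ) = (starRingEnd ℂ) (a n) * a n := by
      rw [← Complex.normSq_eq_conj_mul_self]
      rw [← Complex.sq_norm]
      push_cast [← hs]
      ring
    field_simp
    linear_combination ((starRingEnd ℂ) (a n) * a n - (starRingEnd ℂ) (a n) * z) * mul_inv_cancel₀ (hsC : (((‖a n‖ : ℝ)) : ℂ) ≠ 0) - habs2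
  rw [key, norm_div, norm_mul, norm_mul]
  have habsz := norm_nonneg z
  have h1 : ‖(s:ℂ) - 1‖ = 1 - s := by
    have : ((s:ℂ) - 1) = (((s - 1 : ℝ)):ℂ) := by push_cast; ring
    rw [this, Complex.norm_real, Real.norm_eq_abs, abs_of_nonpos (by linarith)]; ring
  have h2 : ‖(s:ℂ) + (starRingEnd ℂ) (a n) * z‖ ≤ s * (1 + ‖z‖) := by
    calc ‖(s:ℂ) + (starRingEnd ℂ) (a n) * z‖
        ≤ ‖(s:ℂ)‖ + ‖(starRingEnd ℂ) (a n) * z‖ :=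
          norm_add_le _ _
      _ = s + s * ‖z‖ := by
          rw [norm_mul, Complex.norm_conj, Complex.norm_real, Real.norm_eq_abs, _root_.abs_of_nonneg hs0.le, ← hs]
      _ = s * (1 + ‖z‖) := by ring
  have h3 : 1 - ‖z‖ ≤ ‖1 - (starRingEnd ℂ) (a n) * z‖ := by
    calc 1 - ‖z‖ ≤ 1 - ‖(starRingEnd ℂ) (a n) * z‖ := by
          rw [norm_mul, Complex.norm_conj, ← hs]
          nlinarith
      _ ≤ ‖1 - (starRingEnd ℂ) (a n) * z‖ := by
          have := norm_sub_norm_le (1:ℂ) ((starRingEnd ℂ) (a n) * z)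
          simpa using this
  have h4 : ‖(s:ℂ)‖ = s := by
    rw [Complex.norm_real, Real.norm_eq_abs, _root_.abs_of_nonneg hs0.le]
  have hzlt : (0:ℝ) < 1 - ‖z‖ := by linarith
  rw [h1, h4]
  calc (1 - s) * ‖(s:ℂ) + (starRingEnd ℂ) (a n) * z‖
        / (s * ‖1 - (starRingEnd ℂ) (a n) * z‖)
      ≤ ((1 - s) * (s * (1 + ‖z‖))) / (s * (1 - ‖z‖)) := by
        apply div_le_div₀ (mul_nonneg (by linarith : (0:ℝ) ≤ 1 - s) (by positivity)) _ (mul_pos hs0 hzlt) _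
        · exact mul_le_mul_of_nonneg_left h2 (by linarith)
        · exact mul_le_mul_of_nonneg_left h3 hs0.le
    _ = (1 + ‖z‖) / (1 - ‖z‖) * (1 - s) := by
        field_simp

lemma multipliable_Fct {a : ℕ → ℂ} (ha : ∀ n, ‖a n‖ < 1) (ha0 : ∀ n, a n ≠ 0)
    (hsum : Summable (fun n => 1 - ‖a n‖)) {z : ℂ} (hz : ‖z‖ < 1) :
    Multipliable (fun n => Fct a n z) := by
  by_cases hzero : ∃ k, Fct a k z = 0
  · obtain ⟨k, hk⟩ := hzero
    refine ⟨0, ?_⟩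
    have hev : ∀ᶠ s : Finset ℕ in atTop, (∏ i ∈ s, Fct a i z) = 0 := by
      refine eventually_atTop.2 ⟨{k}, fun s hs => ?_⟩
      exact Finset.prod_eq_zero (Finset.singleton_subset_iff.1 hs) hk
    exact (tendsto_congr' (hev.mono fun s h => h.symm)).1 tendsto_const_nhds
  · push_neg at hzero
    have hlog : Summable (fun n => Complex.log (Fct a n z)) := by
      set C : ℝ := (1 + ‖z‖) / (1 - ‖z‖) with hC
      have hC0 : 0 ≤ C := by
        apply div_nonneg <;> [skip; skip] <;> nlinarith [norm_nonneg z]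
      have hb : Summable (fun n => (3/2 : ℝ) * (C * (1 - ‖a n‖))) :=
        (hsum.mul_left C).mul_left _
      apply Summable.of_norm_bounded_eventually hb
      rw [Nat.cofinite_eq_atTop]
      have htend : Tendsto (fun n => C * (1 - ‖a n‖)) atTop (nhds 0) := by
        simpa using (hsum.tendsto_atTop_zero).const_mul C
      filter_upwards [htend.eventually_le_const (by norm_num : (0:ℝ) < 1/2)] with n hn
      have h1 := Fct_sub_one (ha0 n) (ha n) hz
      rw [← hC] at h1
      have h2 : ‖Fct a n z - 1‖ ≤ 1/2 := by
        linarith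
      have h3 := Complex.norm_log_one_add_half_le_self h2
      rw [add_sub_cancel] at h3
      calc ‖Complex.log (Fct a n z)‖ ≤ 3/2 * ‖Fct a n z - 1‖ := h3
        _ ≤ 3/2 * (C * (1 - ‖a n‖)) := by linarith
    exact Complex.multipliable_of_summable_log hlog

lemma abs_tprod_le {a : ℕ → ℂ} (ha : ∀ n, ‖a n‖ < 1) (ha0 : ∀ n, a n ≠ 0)
    (hsum : Summable (fun n => 1 - ‖a n‖)) {z : ℂ} (hz : ‖z‖ < 1)
    (k : ℕ) :
    ‖∏' n, Fct a n z‖ ≤ ‖Fct a k z‖ := by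
  have hm := multipliable_Fct ha ha0 hsum hz
  have hp : Tendsto (fun s : Finset ℕ => ∏ i ∈ s, Fct a i z) atTop
      (nhds (∏' n, Fct a n z)) := hm.hasProd
  have habs : Tendsto (fun s : Finset ℕ => ‖∏ i ∈ s, Fct a i z‖) atTop
      (nhds (‖∏' n, Fct a n z‖)) :=
    (continuous_norm.tendsto _).comp hp
  apply le_of_tendsto habs
  refine eventually_atTop.2 ⟨{k}, fun s hs => ?_⟩
  have hks : k ∈ s := Finset.singleton_subset_iff.1 hs
  rw [← Finset.mul_prod_erase s _ hks, norm_mul]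
  have : ‖∏ i ∈ s.erase k, Fct a i z‖ ≤ 1 := by
    rw [norm_prod]
    apply Finset.prod_le_one (fun i _ => norm_nonneg _)
      (fun i _ => abs_Fct_le_one (ha0 i) (ha i) hz)
  nlinarith [norm_nonneg (Fct a k z), norm_nonneg (∏ i ∈ s.erase k, Fct a i z)]

lemma arg_le_abs_sub_one {w : ℂ} (hw : ‖w‖ = 1) :
    |w.arg| ≤ Real.pi / 2 * ‖w - 1‖ := by
  set t := w.arg with ht
  have hw' : w = Complex.exp (t * Complex.I) := by
    have := Complex.norm_mul_exp_arg_mul_I w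
    rw [hw] at this; simpa using this.symm
  have hcos : Real.cos t ≤ 1 - 2 / Real.pi ^ 2 * t ^ 2 :=
    Real.cos_le_one_sub_mul_cos_sq (abs_le.2 ⟨(Complex.neg_pi_lt_arg w).le, Complex.arg_le_pi w⟩)
  have hsq : ‖w - 1‖ ^ 2 = 2 - 2 * Real.cos t := by
    rw [hw', Complex.exp_mul_I, Complex.sq_norm]
    simp [Complex.normSq_apply, Complex.add_re, Complex.add_im, Complex.sub_re, Complex.sub_im,
      Complex.mul_re, Complex.mul_im, Complex.cos_ofReal_re, Complex.cos_ofReal_im,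
      Complex.sin_ofReal_re, Complex.sin_ofReal_im]
    nlinarith [Real.sin_sq_add_cos_sq t]
  have hpi := Real.pi_gt_three
  have e1 : (2 / Real.pi * |t|) ^ 2 = 4 / Real.pi ^ 2 * t ^ 2 := by
    rw [mul_pow, _root_.sq_abs]; ring
  have hq : (2 / Real.pi * |t|) ^ 2 ≤ ‖w - 1‖ ^ 2 := by
    rw [e1, hsq]
    have h := mul_le_mul_of_nonneg_left hcos (by norm_num : (0:ℝ) ≤ 2)
    have e : (2:ℝ) * (1 - 2 / Real.pi ^ 2 * t ^ 2) = 2 - 4 / Real.pi ^ 2 * t ^ 2 := by ring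
    rw [e] at h
    linarith
  have h4 : 0 ≤ 2 / Real.pi * |t| := by positivity
  have h3 : 2 / Real.pi * |t| ≤ ‖w - 1‖ :=
    (pow_le_pow_iff_left₀ h4 (norm_nonneg _) two_ne_zero).1 hq
  have h5 : (0:ℝ) < Real.pi := by linarith
  calc |t| = Real.pi / 2 * (2 / Real.pi * |t|) := by field_simp
    _ ≤ Real.pi / 2 * ‖w - 1‖ :=
      mul_le_mul_of_nonneg_left h3 (by positivity)

lemma exists_tail_close {a : ℕ → ℂ} (ha : ∀ n, ‖a n‖ < 1) {w : ℂ}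
    (hw : ‖w‖ = 1) (hwc : w ∈ closure (Set.range a)) (N : ℕ) {ε : ℝ} (hε : 0 < ε) :
    ∃ n, N ≤ n ∧ ‖a n - w‖ < ε := by
  have hsplit : Set.range a = (a '' {m | m < N}) ∪ Set.range (fun k => a (N + k)) := by
    ext x
    constructor
    · rintro ⟨m, rfl⟩
      rcases lt_or_ge m N with h | h
      · exact Or.inl ⟨m, h, rfl⟩
      · exact Or.inr ⟨m - N, by simp only []; rw [Nat.add_sub_cancel' h]⟩
    · rintro (⟨m, _, rfl⟩ | ⟨k, rfl⟩) <;> exact ⟨_, rfl⟩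
  rw [hsplit, closure_union] at hwc
  rcases hwc with hwc | hwc
  · exfalso
    have hfin : (a '' {m | m < N}).Finite := Set.Finite.image _ (Set.finite_lt_nat N)
    rw [hfin.isClosed.closure_eq] at hwc
    obtain ⟨m, _, hm⟩ := hwc
    have := ha m
    rw [hm, hw] at this
    exact absurd this (lt_irrefl 1)
  · rw [Metric.mem_closure_iff] at hwc
    obtain ⟨y, ⟨k, rfl⟩, hy⟩ := hwc ε hε
    refine ⟨N + k, Nat.le_add_right _ _, ?_⟩
    rw [Complex.dist_eq] at hy
    rwa [← neg_sub, norm_neg] at hy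
lemma blaschke_eq (a : ℕ → ℂ) (z : ℂ) : blaschkeProduct a z = ∏' n, Fct a n z := rfl

/-- If a Blaschke product has radial limits of modulus one at every point of the
unit circle, then the set `E = A'` of accumulation points on `T` of its zero set
is closed and nowhere dense in `T`. -/
theorem stmt_14 (a : ℕ → ℂ) (ha : ∀ n, a n ∈ ball (0 : ℂ) 1) (ha0 : ∀ n, a n ≠ 0)
    (hsum : Summable (fun n => 1 - ‖a n‖))
    (hrad : ∀ θ : ℝ, ∃ d : ℂ, ‖d‖ = 1 ∧
      Tendsto (fun r : ℝ => blaschkeProduct a ((r : ℂ) * Complex.exp (θ * Complex.I)))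
        (nhdsWithin 1 (Iio 1)) (nhds d))
    (E : Set ℂ)
    (hE : E = {ζ : ℂ | ‖ζ‖ = 1 ∧ ζ ∈ closure (Set.range a)}) :
    IsClosed E ∧
      ∀ U : Set ℂ, IsOpen U → (U ∩ {ζ : ℂ | ‖ζ‖ = 1}).Nonempty →
        ((U ∩ {ζ : ℂ | ‖ζ‖ = 1}) \ E).Nonempty := by
  have halt : ∀ n, ‖a n‖ < 1 := by
    intro n
    have := ha n
    rw [mem_ball, Complex.dist_eq, sub_zero] at this
    exact this
  constructor
  · rw [hE]
    have hrw : {ζ : ℂ | ‖ζ‖ = 1 ∧ ζ ∈ closure (Set.range a)}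
        = {ζ : ℂ | ‖ζ‖ = 1} ∩ closure (Set.range a) := rfl
    rw [hrw]
    exact (isClosed_eq continuous_norm continuous_const).inter isClosed_closure
  intro U hU hne
  by_contra hcon
  rw [Set.not_nonempty_iff_eq_empty, Set.diff_eq_empty] at hcon
  -- set up the arc
  obtain ⟨ζ₀, hζU, hζ1⟩ := hne
  have hζ1' : ‖ζ₀‖ = 1 := hζ1
  set θ₀ := ζ₀.arg with hθ₀
  have hgexp : Complex.exp (θ₀ * Complex.I) = ζ₀ := by
    have := Complex.norm_mul_exp_arg_mul_I ζ₀
    rw [hζ1'] at this; simpa using this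
  have hgcont : Continuous (fun θ : ℝ => Complex.exp (θ * Complex.I)) :=
    Complex.continuous_exp.comp (Complex.continuous_ofReal.mul continuous_const)
  obtain ⟨δ, hδ, hδsub⟩ := Metric.isOpen_iff.mp (hU.preimage hgcont) θ₀
    (by simpa [hgexp] using hζU)
  have hI : ∀ θ ∈ Metric.ball θ₀ δ, Complex.exp (θ * Complex.I) ∈ closure (Set.range a) := by
    intro θ hθ
    have hmem : Complex.exp (θ * Complex.I) ∈ U ∩ {ζ : ℂ | ‖ζ‖ = 1} :=
      ⟨hδsub hθ, Complex.norm_exp_ofReal_mul_I θ⟩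
    have := hcon hmem
    rw [hE] at this
    exact this.2
  by_cases hgood : ∃ θ ∈ Metric.ball θ₀ δ,
      {n | ‖a n - Complex.exp (θ * Complex.I)‖ < 2 * (1 - ‖a n‖)}.Infinite
  · -- good case: radial limit contradiction
    obtain ⟨θ, hθI, hSinf⟩ := hgood
    obtain ⟨d, hd1, htd⟩ := hrad θ
    have habs : Tendsto (fun r : ℝ =>
        ‖blaschkeProduct a ((r : ℂ) * Complex.exp (θ * Complex.I))‖)
        (nhdsWithin 1 (Iio 1)) (nhds 1) := by
      have := (continuous_norm.tendsto d).comp htd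
      rwa [hd1] at this
    have hev := habs.eventually_const_lt (show (0.95:ℝ) < 1 by norm_num)
    obtain ⟨l, hl, hIoo⟩ := mem_nhdsLT_iff_exists_Ioo_subset.mp hev
    have htends : Tendsto (fun n => ‖a n‖) atTop (nhds 1) := by
      have h := hsum.tendsto_atTop_zero
      have := (tendsto_const_nhds (x := (1:ℝ)) (f := atTop)).sub h
      simpa using this
    have hev2 : ∀ᶠ n in atTop, l < ‖a n‖ :=
      htends.eventually (eventually_gt_nhds hl)
    obtain ⟨N₁, hN₁⟩ := eventually_atTop.mp hev2
    obtain ⟨n, hnS, hn₁⟩ := hSinf.exists_gt N₁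
    set s : ℝ := ‖a n‖ with hs
    have hs1 : s < 1 := halt n
    have hs0 : 0 < s := norm_pos_iff.mpr (ha0 n)
    set z : ℂ := (s : ℂ) * Complex.exp (θ * Complex.I) with hzdef
    have hzabs : ‖z‖ = s := by
      rw [hzdef, norm_mul, Complex.norm_real, Real.norm_eq_abs, Complex.norm_exp_ofReal_mul_I,
        _root_.abs_of_nonneg hs0.le, mul_one]
    have hz : ‖z‖ < 1 := by rw [hzabs]; exact hs1
    have hP : (0.95 : ℝ) < ‖blaschkeProduct a z‖ := by
      refine hIoo ⟨hN₁ n hn₁.le, hs1⟩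
    have hB : ‖blaschkeProduct a z‖ ≤ ‖Fct a n z‖ := by
      rw [blaschke_eq]
      exact abs_tprod_le halt ha0 hsum hz n
    have hnum : ‖a n - z‖ ≤ 3 * (1 - s) := by
      have h1 : ‖Complex.exp (θ * Complex.I) - z‖ = 1 - s := by
        have he : Complex.exp (θ * Complex.I) - z
            = (((1 - s : ℝ)) : ℂ) * Complex.exp (θ * Complex.I) := by
          rw [hzdef]; push_cast; ring
        rw [he, norm_mul, Complex.norm_real, Real.norm_eq_abs, Complex.norm_exp_ofReal_mul_I,
          _root_.abs_of_nonneg (by linarith), mul_one]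
      calc ‖a n - z‖
          ≤ ‖a n - Complex.exp (θ * Complex.I)‖
            + ‖Complex.exp (θ * Complex.I) - z‖ := by
            have := norm_add_le (a n - Complex.exp (θ * Complex.I))
              (Complex.exp (θ * Complex.I) - z)
            simpa using this
        _ ≤ 2 * (1 - s) + (1 - s) := by
            have hS := hnS
            rw [Set.mem_setOf_eq] at hS
            rw [h1]
            linarith
        _ = 3 * (1 - s) := by ring
    have hden : (10 / 9 : ℝ) * (‖a n - z‖) ^ 2
        ≤ (‖1 - (starRingEnd ℂ) (a n) * z‖) ^ 2 := by
      rw [Complex.sq_norm, Complex.sq_norm, normSq_identity]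
      have h1 : normSq (a n) = s ^ 2 := by rw [← Complex.sq_norm]
      have h2 : normSq z = s ^ 2 := by rw [← Complex.sq_norm, hzabs]
      have h3 : normSq (a n - z) = ‖a n - z‖ ^ 2 := (Complex.sq_norm _).symm
      rw [h1, h2, h3]
      have h4 : ‖a n - z‖ ^ 2 ≤ 9 * (1 - s) ^ 2 := by
        nlinarith [norm_nonneg (a n - z)]
      nlinarith [sq_nonneg (1 - s), sq_nonneg (1 + s)]
    have hDpos := denom_pos hs1 hz
    have hFabs := abs_Fct a n z (ha0 n)
    have hFle : ‖Fct a n z‖ * ‖1 - (starRingEnd ℂ) (a n) * z‖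
        = ‖a n - z‖ := by
      rw [hFabs]; exact div_mul_cancel₀ _ hDpos.ne'
    have hF : (0.95:ℝ) < ‖Fct a n z‖ := lt_of_lt_of_le hP hB
    have h2 : (‖Fct a n z‖)^2 * (‖1 - (starRingEnd ℂ) (a n) * z‖)^2
        = (‖a n - z‖)^2 := by rw [← hFle]; ring
    have h3 : (0.95:ℝ) * 0.95 < ‖Fct a n z‖ * ‖Fct a n z‖ :=
      mul_lt_mul'' hF hF (by norm_num) (by norm_num)
    nlinarith [h2, hden, mul_pos hDpos hDpos, hF, h3]
  · -- bad case: Baire category contradiction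
    push_neg at hgood
    set C : ℕ → Set ℝ := fun N => {θ | ∀ n, N ≤ n →
      2 * (1 - ‖a n‖) ≤ ‖a n - Complex.exp (θ * Complex.I)‖} with hCdef
    have hCclosed : ∀ N, IsClosed (C N) := by
      intro N
      have : C N = ⋂ (n : ℕ), ⋂ (_ : N ≤ n),
          {θ : ℝ | 2 * (1 - ‖a n‖) ≤ ‖a n - Complex.exp (θ * Complex.I)‖} := by
        ext θ; simp [hCdef]
      rw [this]
      refine isClosed_iInter fun n => isClosed_iInter fun _ => ?_
      exact isClosed_le continuous_const
        (continuous_norm.comp (continuous_const.sub hgcont))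
    have hcover : ∀ θ ∈ Metric.ball θ₀ δ, ∃ N, θ ∈ C N := by
      intro θ hθ
      have hfin := hgood θ hθ
      obtain ⟨m, hm⟩ := hfin.bddAbove
      refine ⟨m + 1, fun n hn => ?_⟩
      by_contra hlt
      push_neg at hlt
      have : n ≤ m := hm hlt
      omega
    have hBaire : ∃ N θ' η, 0 < η ∧ Metric.ball θ' η ⊆ C N ∩ Metric.ball θ₀ δ := by
      by_contra hno
      push_neg at hno
      set W : ℕ → Set ℝ := fun N => (C N)ᶜ ∪ (closure (Metric.ball θ₀ δ))ᶜ with hWdef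
      have hWopen : ∀ N, IsOpen (W N) :=
        fun N => ((hCclosed N).isOpen_compl).union isClosed_closure.isOpen_compl
      have hWdense : ∀ N, Dense (W N) := by
        intro N
        rw [dense_iff_inter_open]
        intro O hO hOne
        by_cases hOc : O ⊆ closure (Metric.ball θ₀ δ)
        · have hOI : O ⊆ Metric.ball θ₀ δ := by
            have h1 : O ⊆ closedBall θ₀ δ := by
              rwa [closure_ball θ₀ hδ.ne'] at hOc
            have h2 : O ⊆ interior (closedBall θ₀ δ) := hO.subset_interior_iff.mpr h1
            rwa [interior_closedBall θ₀ hδ.ne'] at h2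
          obtain ⟨x, hx⟩ := hOne
          obtain ⟨r, hr, hrO⟩ := Metric.isOpen_iff.mp hO x hx
          have hnsub := hno N x r hr
          have : ¬ Metric.ball x r ⊆ C N := by
            intro hsub
            exact hnsub fun y hy => ⟨hsub hy, hOI (hrO hy)⟩
          obtain ⟨y, hy, hyC⟩ := not_subset.mp this
          exact ⟨y, hrO hy, Or.inl hyC⟩
        · obtain ⟨y, hyO, hyc⟩ := not_subset.mp hOc
          exact ⟨y, hyO, Or.inr hyc⟩
      have hdense : Dense (⋂ N, W N) := dense_iInter_of_isOpen hWopen hWdense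
      obtain ⟨x, hxI, hxW⟩ := hdense.inter_open_nonempty (Metric.ball θ₀ δ) isOpen_ball
        ⟨θ₀, mem_ball_self hδ⟩
      obtain ⟨N, hN⟩ := hcover x hxI
      have hxWN : x ∈ W N := Set.mem_iInter.mp hxW N
      rcases hxWN with h | h
      · exact h hN
      · exact h (subset_closure hxI)
    obtain ⟨N, θ', η, hη, hball⟩ := hBaire
    have hθ'mem := hball (mem_ball_self hη)
    have hθ'I : θ' ∈ Metric.ball θ₀ δ := hθ'mem.2
    set w₀ : ℂ := Complex.exp (θ' * Complex.I) with hw₀def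
    have habsw₀ : ‖w₀‖ = 1 := Complex.norm_exp_ofReal_mul_I θ'
    have hclos : w₀ ∈ closure (Set.range a) := hI θ' hθ'I
    have hε : (0:ℝ) < η / 4 := by linarith
    obtain ⟨n, hnN, hnw⟩ := exists_tail_close halt habsw₀ hclos N hε
    set s : ℝ := ‖a n‖ with hs
    have hs1 : s < 1 := halt n
    have hs0 : 0 < s := norm_pos_iff.mpr (ha0 n)
    have h1s : 1 - s ≤ ‖a n - w₀‖ := by
      have := norm_sub_norm_le w₀ (a n)
      rw [habsw₀] at this
      calc 1 - s ≤ ‖w₀ - a n‖ := this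
        _ = ‖a n - w₀‖ := by rw [← neg_sub, norm_neg]
    set w : ℂ := a n / (s : ℂ) with hwdef
    have hsC : ((s:ℝ):ℂ) ≠ 0 := by exact_mod_cast hs0.ne'
    have habsw : ‖w‖ = 1 := by
      rw [hwdef, norm_div, Complex.norm_real, Real.norm_eq_abs, _root_.abs_of_nonneg hs0.le, ← hs, div_self hs0.ne']
    have hwan : ‖w - a n‖ = 1 - s := by
      have he : w - a n = a n * ((((1 - s) / s : ℝ)) : ℂ) := by
        rw [hwdef]; push_cast; field_simp
      rw [he, norm_mul, Complex.norm_real, Real.norm_eq_abs, ← hs,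
        _root_.abs_of_nonneg (div_nonneg (by linarith) hs0.le)]
      field_simp
    have hw₀ne : w₀ ≠ 0 := Complex.exp_ne_zero _
    set ζ : ℂ := w / w₀ with hζdef
    have habsζ : ‖ζ‖ = 1 := by
      rw [hζdef, norm_div, habsw, habsw₀, div_one]
    have hζ1 : ‖ζ - 1‖ = ‖w - w₀‖ := by
      rw [hζdef, div_sub_one hw₀ne, norm_div, habsw₀, div_one]
    have harg := arg_le_abs_sub_one habsζ
    set θ'' : ℝ := θ' + ζ.arg with hθ''def
    have hexpθ'' : Complex.exp (θ'' * Complex.I) = w := by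
      have h1 : ((θ'' : ℝ) : ℂ) * Complex.I
          = (θ' : ℂ) * Complex.I + (ζ.arg : ℂ) * Complex.I := by
        rw [hθ''def]; push_cast; ring
      rw [h1, Complex.exp_add]
      have h2 : Complex.exp ((ζ.arg : ℂ) * Complex.I) = ζ := by
        have := Complex.norm_mul_exp_arg_mul_I ζ
        rw [habsζ] at this; simpa using this
      rw [h2, ← hw₀def, hζdef]
      field_simp
    have hwmw₀ : ‖w - w₀‖ < η / 2 := by
      calc ‖w - w₀‖ ≤ ‖w - a n‖ + ‖a n - w₀‖ := by
            have := norm_add_le (w - a n) (a n - w₀)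
            simpa using this
        _ < (1 - s) + η / 4 := by rw [hwan]; linarith
        _ ≤ η / 4 + η / 4 := by linarith
        _ = η / 2 := by ring
    have hpi4 : Real.pi < 4 := by
      have := Real.pi_lt_d2
      linarith
    have hθ''ball : θ'' ∈ Metric.ball θ' η := by
      rw [mem_ball, Real.dist_eq, hθ''def, add_sub_cancel_left]
      calc |ζ.arg| ≤ Real.pi / 2 * ‖ζ - 1‖ := harg
        _ = Real.pi / 2 * ‖w - w₀‖ := by rw [hζ1]
        _ < Real.pi / 2 * (η / 2) := by
            apply mul_lt_mul_of_pos_left hwmw₀ (by positivity)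
        _ < η := by nlinarith [Real.pi_pos]
    have hC := (hball hθ''ball).1
    have hcontra := hC n hnN
    rw [hexpθ''] at hcontra
    have habs_anw : ‖a n - w‖ = 1 - s := by
      rw [← neg_sub w (a n), norm_neg, hwan]
    rw [habs_anw] at hcontra
    linarith
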